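/- Let F be a field of characteristic different from two, and let p and q be forms over F with p anisotropic. If the tensor product p ⊗ q is isotropic, then p contains a subform r with dim r ≤ dim q such that r ⊗ q is isotropic. -/

import Mathlib

set_option synthInstance.maxHeartbeats 1000000
set_option maxHeartbeats 4000000

open scoped BigOperators Classical

namespace QF

section Defs

variable {R : Type*} [CommRing R]

/-- Evaluation of the diagonal quadratic form with coefficients `d` at the vector `v`. -/
def evalQF {n : ℕ} (d : Fin n → R) (v : Fin n → R) : R := ∑ i, d i * v i ^ 2

/-- A form is isotropic if it represents zero non-trivially. -/
def Isotropic {n : ℕ} (d : Fin n → R) : Prop := ∃ v : Fin n → R, v ≠ 0 ∧ evalQF d v = 0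

def Anisotropic {n : ℕ} (d : Fin n → R) : Prop := ¬ Isotropic d

/-- Nondegeneracy of a diagonal form: all coefficients are nonzero. -/
def Nondeg {n : ℕ} (d : Fin n → R) : Prop := ∀ i, d i ≠ 0

/-- Two diagonal forms are isometric if a linear equivalence matches their values. -/
def Isometric {m n : ℕ} (d : Fin m → R) (e : Fin n → R) : Prop :=
  ∃ φ : (Fin m → R) ≃ₗ[R] (Fin n → R), ∀ v, evalQF e (φ v) = evalQF d v

/-- Orthogonal sum of diagonal forms. -/
def osum {m n : ℕ} (d : Fin m → R) (e : Fin n → R) : Fin (m + n) → R := Fin.append d e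

/-- Tensor product of diagonal forms. -/
def tensorQF {m n : ℕ} (d : Fin m → R) (e : Fin n → R) : Fin (m * n) → R :=
  fun i => d (finProdFinEquiv.symm i).1 * e (finProdFinEquiv.symm i).2

/-- Scaling of a form by a scalar. -/
def smulQF {n : ℕ} (a : R) (d : Fin n → R) : Fin n → R := fun i => a * d i

/-- `k` copies of the hyperbolic plane `⟨1,-1⟩`. -/
def hypform {R : Type*} [CommRing R] (k : ℕ) : Fin (k + k) → R :=
  Fin.append (fun _ => 1) (fun _ => -1)

/-- A form is hyperbolic if it is isometric to a sum of hyperbolic planes,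
i.e. its Witt index is half its dimension. -/
def IsHyperbolic {n : ℕ} (d : Fin n → R) : Prop := ∃ k : ℕ, Isometric d (hypform k)

/-- The Witt index: the largest `k` such that `d ≅ k×⟨1,-1⟩ ⊥ r`. -/
noncomputable def WittIndex {n : ℕ} (d : Fin n → R) : ℕ :=
  sSup {k : ℕ | ∃ (m : ℕ) (r : Fin m → R), Isometric d (osum (hypform k) r)}

/-- `r` is a subform of `d`: `d ≅ r ⊥ s` for some (nondegenerate) form `s`. -/
def Subform {m n : ℕ} (r : Fin m → R) (d : Fin n → R) : Prop :=
  ∃ (k : ℕ) (s : Fin k → R), Nondeg s ∧ Isometric d (osum r s)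

/-- The set of nonzero represented values. -/
def Dset {n : ℕ} (d : Fin n → R) : Set R :=
  {a | a ≠ 0 ∧ ∃ v : Fin n → R, evalQF d v = a}

/-- The group of similarity factors `G(q) = {a : a·q ≅ q}`. -/
def Gset {n : ℕ} (d : Fin n → R) : Set R :=
  {a | a ≠ 0 ∧ Isometric (smulQF a d) d}

/-- `H(q) = {a : ⟨1,-a⟩ ⊗ q is isotropic}`. -/
def Hset {n : ℕ} (d : Fin n → R) : Set R :=
  {a | a ≠ 0 ∧ Isotropic (tensorQF ![1, -a] d)}

/-- Base change of a form along a ring homomorphism (e.g. a field extension). -/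
def bc {S : Type*} [CommRing S] (f : R →+* S) {n : ℕ} (d : Fin n → R) : Fin n → S :=
  fun i => f (d i)

/-- The Pfister form `⟨1,a 0⟩ ⊗ ⋯ ⊗ ⟨1, a (n-1)⟩`: its `2^n` diagonal coefficients are
the products `∏_{j ∈ S} a j` over subsets `S` of the index set. -/
noncomputable def pfisterOf {n : ℕ} (a : Fin n → R) : Fin (2 ^ n) → R :=
  fun i => ∏ j : Fin n, if (finFunctionFinEquiv.symm i) j = 0 then 1 else a j

/-- `π` is an `n`-fold Pfister form. -/
def IsNPfister (n : ℕ) {m : ℕ} (π : Fin m → R) : Prop :=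
  ∃ a : Fin n → R, (∀ i, a i ≠ 0) ∧ Isometric π (pfisterOf a)

/-- `π` is a Pfister form. -/
def IsPfister {m : ℕ} (π : Fin m → R) : Prop := ∃ n : ℕ, IsNPfister n π

end Defs

/-- The quadric polynomial `p(X₁,…,Xₙ) = ∑ dᵢ Xᵢ²` attached to a diagonal form. -/
noncomputable def formPoly {F : Type*} [CommRing F] {n : ℕ} (d : Fin n → F) :
    MvPolynomial (Fin n) F :=
  ∑ i, MvPolynomial.C (d i) * MvPolynomial.X i ^ 2

/-- The affine coordinate ring `F[X₁,…,Xₙ]/(p(X))` of the quadric `p = 0`. -/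
abbrev CoordRing {F : Type*} [CommRing F] {n : ℕ} (d : Fin n → F) : Type _ :=
  MvPolynomial (Fin n) F ⧸ Ideal.span {formPoly d}

/-- The function field `F(p)` of the quadric `p = 0`: the total fraction ring of the
coordinate ring (the quotient field when the coordinate ring is a domain, i.e. when `p` is
anisotropic of dimension at least 2). -/
abbrev FunField {F : Type*} [Field F] {n : ℕ} (d : Fin n → F) : Type _ :=
  FractionRing (CoordRing d)

end QF

section BecherAux

open QF

variable {F : Type*} [Field F]

/-- The diagonal bilinear form attached to coefficients `d`. -/
noncomputable def bilinOf {n : ℕ} (d : Fin n → F) :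
    LinearMap.BilinForm F (Fin n → F) :=
  LinearMap.mk₂ F (fun x y => ∑ t, d t * x t * y t)
    (fun x x' y => by
      simp only [Pi.add_apply, add_mul, mul_add, Finset.sum_add_distrib])
    (fun a x y => by
      rw [Finset.smul_sum]
      exact Finset.sum_congr rfl fun t _ => by
        simp only [Pi.smul_apply, smul_eq_mul]; ring)
    (fun x y y' => by
      simp only [Pi.add_apply, add_mul, mul_add, Finset.sum_add_distrib])
    (fun a x y => by
      rw [Finset.smul_sum]
      exact Finset.sum_congr rfl fun t _ => by
        simp only [Pi.smul_apply, smul_eq_mul]; ring)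

lemma bilinOf_apply {n : ℕ} (d : Fin n → F) (x y : Fin n → F) :
    bilinOf d x y = ∑ t, d t * x t * y t := rfl

lemma bilinOf_self {n : ℕ} (d : Fin n → F) (x : Fin n → F) :
    bilinOf d x x = evalQF d x := by
  rw [bilinOf_apply, evalQF]
  exact Finset.sum_congr rfl fun t _ => by ring

lemma bilinOf_isSymm {n : ℕ} (d : Fin n → F) : (bilinOf d).IsSymm := by
  refine ⟨fun x y => ?_⟩
  simp only [RingHom.id_apply, bilinOf_apply]
  exact Finset.sum_congr rfl fun t _ => by ring

/-- Evaluation of a quadratic form at a combination of pairwise orthogonal vectors. -/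
lemma eval_sum_orth {n : ℕ} (d : Fin n → F) {ι : Type*} [Fintype ι]
    (c : ι → Fin n → F) (hc : ∀ i j, i ≠ j → bilinOf d (c i) (c j) = 0) (z : ι → F) :
    evalQF d (∑ i, z i • c i) = ∑ i, evalQF d (c i) * z i ^ 2 := by
  rw [← bilinOf_self]
  rw [map_sum]
  have h1 : ∀ i : ι, (bilinOf d (∑ j, z j • c j)) (z i • c i)
      = z i * (z i * bilinOf d (c i) (c i)) := by
    intro i
    rw [map_smul, smul_eq_mul]
    congr 1
    rw [map_sum, LinearMap.sum_apply]
    rw [Finset.sum_eq_single i]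
    · rw [map_smul, LinearMap.smul_apply, smul_eq_mul]
    · intro j _ hji
      rw [map_smul, LinearMap.smul_apply, smul_eq_mul, hc j i hji, mul_zero]
    · intro h; exact absurd (Finset.mem_univ i) h
  rw [Finset.sum_congr rfl fun i _ => h1 i]
  exact Finset.sum_congr rfl fun i _ => by rw [bilinOf_self]; ring

/-- Evaluation of a tensor product form, grouped by columns. -/
lemma tensor_eval {a b : ℕ} (d : Fin a → F) (e : Fin b → F) (w : Fin (a * b) → F) :
    evalQF (tensorQF d e) w
      = ∑ j, e j * evalQF d (fun i => w (finProdFinEquiv (i, j))) := by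
  rw [evalQF]
  rw [← Equiv.sum_comp (finProdFinEquiv (m := a) (n := b))
    (fun x => tensorQF d e x * w x ^ 2)]
  rw [Fintype.sum_prod_type]
  rw [Finset.sum_comm]
  refine Finset.sum_congr rfl fun j _ => ?_
  rw [evalQF, Finset.mul_sum]
  refine Finset.sum_congr rfl fun i _ => ?_
  simp only [tensorQF, Equiv.symm_apply_apply]
  ring

end BecherAux


open QF in
/-- Becher's theorem: if `p` and `q` are forms over `F` (char `F ≠ 2`) with `p` anisotropic and
`p ⊗ q` isotropic, then `p` contains a subform `r` with `dim r ≤ dim q` such that `r ⊗ q` is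
isotropic. -/
theorem stmt_4 {F : Type*} [Field F] (h2 : (2 : F) ≠ 0)
    {np nq : ℕ} (p : Fin np → F) (q : Fin nq → F)
    (hp : Nondeg p) (hq : Nondeg q) (hp0 : 0 < np) (hq0 : 0 < nq)
    (hpan : Anisotropic p) (hiso : Isotropic (tensorQF p q)) :
    ∃ (k : ℕ) (r : Fin k → F), k ≤ nq ∧ Nondeg r ∧ Subform r p ∧
      Isotropic (tensorQF r q) := by
  classical
  obtain ⟨w, hw0, hwval⟩ := hiso
  haveI : Invertible (2 : F) := invertibleOfNonzero h2
  set B : LinearMap.BilinForm F (Fin np → F) := bilinOf p with hBdef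
  have haniso : ∀ x : Fin np → F, evalQF p x = 0 → x = 0 := by
    intro x hx
    by_contra hne
    exact hpan ⟨x, hne, hx⟩
  -- the columns of the isotropic vector
  set u : Fin nq → (Fin np → F) := fun j i => w (finProdFinEquiv (i, j)) with hu
  set X : Submodule F (Fin np → F) := Submodule.span F (Set.range u) with hXdef
  have huX : ∀ j, u j ∈ X := fun j => Submodule.subset_span ⟨j, rfl⟩
  set k := Module.finrank F X with hkdef
  have hkle : k ≤ nq := by
    have h1 := finrank_span_le_card (R := F) (Set.range u)
    rw [Set.toFinset_range] at h1
    exact le_trans h1 (le_trans Finset.card_image_le (by simp))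
  -- nondegeneracy of the restriction to X
  have hrestr : (B.restrict X).Nondegenerate := by
    refine (LinearMap.IsRefl.nondegenerate_iff_separatingLeft (B := B.restrict X)
      ((bilinOf_isSymm p).restrict X).isRefl).mpr ?_
    intro x hx
    have hxx : evalQF p (x : Fin np → F) = 0 := by
      rw [← bilinOf_self]
      simpa [LinearMap.BilinForm.restrict_apply] using hx x
    exact Subtype.ext (haniso _ hxx)
  have hcompl : IsCompl X (B.orthogonal X) :=
    (B.restrict_nondegenerate_iff_isCompl_orthogonal (bilinOf_isSymm p).isRefl).mp hrestr
  set Y : Submodule F (Fin np → F) := B.orthogonal X with hYdef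
  set m := Module.finrank F Y with hmdef
  -- orthogonal bases of X and Y
  obtain ⟨vX, hvX⟩ := LinearMap.BilinForm.exists_orthogonal_basis
    (LinearMap.BilinForm.isSymm_iff.mp ((bilinOf_isSymm p).restrict X))
  obtain ⟨vY, hvY⟩ := LinearMap.BilinForm.exists_orthogonal_basis
    (LinearMap.BilinForm.isSymm_iff.mp ((bilinOf_isSymm p).restrict Y))
  set c1 : Fin k → (Fin np → F) := fun i => (vX i : Fin np → F) with hc1def
  set c2 : Fin m → (Fin np → F) := fun j => (vY j : Fin np → F) with hc2def
  have hc1orth : ∀ i j, i ≠ j → B (c1 i) (c1 j) = 0 := by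
    intro i j hij
    simpa [LinearMap.BilinForm.restrict_apply] using hvX hij
  have hc2orth : ∀ i j, i ≠ j → B (c2 i) (c2 j) = 0 := by
    intro i j hij
    simpa [LinearMap.BilinForm.restrict_apply] using hvY hij
  have hcross : ∀ i j, B (c1 i) (c2 j) = 0 := by
    intro i j
    exact (LinearMap.BilinForm.mem_orthogonal_iff.mp (vY j).2) (c1 i) (vX i).2
  have hcross' : ∀ i j, B (c2 j) (c1 i) = 0 := by
    intro i j
    have := (bilinOf_isSymm p).eq (c1 i) (c2 j)
    rw [← hBdef] at this
    rw [← this, hcross]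
  set r : Fin k → F := fun i => evalQF p (c1 i) with hrdef
  set s : Fin m → F := fun j => evalQF p (c2 j) with hsdef
  have hrnd : Nondeg r := by
    intro i hri
    have h0 := haniso _ hri
    exact vX.ne_zero i (Subtype.ext (by simpa [hc1def] using h0))
  have hsnd : Nondeg s := by
    intro j hsj
    have h0 := haniso _ hsj
    exact vY.ne_zero j (Subtype.ext (by simpa [hc2def] using h0))
  -- the combined basis
  set cc : Fin k ⊕ Fin m → (Fin np → F) := Sum.elim c1 c2 with hccdef
  have hccorth : ∀ a b, a ≠ b → B (cc a) (cc b) = 0 := by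
    rintro (i | i) (j | j) hab
    · exact hc1orth i j (by simpa using hab)
    · exact hcross i j
    · exact hcross' j i
    · exact hc2orth i j (by simpa using hab)
  set cb : Module.Basis (Fin k ⊕ Fin m) F (Fin np → F) :=
    (vX.prod vY).map (X.prodEquivOfIsCompl Y hcompl) with hcbdef
  have hcb : ∀ t, cb t = cc t := by
    rintro (i | j) <;>
      simp [hcbdef, Module.Basis.map_apply, Module.Basis.prod_apply, hccdef, hc1def, hc2def]
  set b2 : Module.Basis (Fin (k + m)) F (Fin np → F) := cb.reindex finSumFinEquiv with hb2def
  have hb2 : ∀ t, b2 t = cc (finSumFinEquiv.symm t) := by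
    intro t
    rw [hb2def, Module.Basis.reindex_apply, hcb]
  have hb2orth : ∀ a b, a ≠ b → B (b2 a) (b2 b) = 0 := by
    intro a b hab
    rw [hb2 a, hb2 b]
    exact hccorth _ _ (fun h => hab (by simpa using congrArg finSumFinEquiv h))
  have hosum : ∀ t, osum r s t = evalQF p (b2 t) := by
    intro t
    obtain ⟨t', rfl⟩ : ∃ t', finSumFinEquiv t' = t := ⟨finSumFinEquiv.symm t, by simp⟩
    rw [hb2, Equiv.symm_apply_apply]
    cases t' with
    | inl i =>
      rw [finSumFinEquiv_apply_left]
      simp [osum, Fin.append_left, hccdef, hrdef]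
    | inr j =>
      rw [finSumFinEquiv_apply_right]
      simp [osum, Fin.append_right, hccdef, hsdef]
  -- the isometry p ≅ r ⊥ s
  have hisom : Isometric p (osum r s) := by
    refine ⟨b2.equivFun, fun v => ?_⟩
    have hv : ∑ t, b2.equivFun v t • b2 t = v := b2.sum_equivFun v
    have := eval_sum_orth p (fun t => b2 t) hb2orth (b2.equivFun v)
    rw [hv] at this
    rw [this, evalQF]
    exact Finset.sum_congr rfl fun t _ => by rw [hosum t]
  -- the isotropic vector for r ⊗ q
  set a : Fin k → Fin nq → F := fun i j => vX.repr ⟨u j, huX j⟩ i with hadef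
  have hudecomp : ∀ j, u j = ∑ i, a i j • c1 i := by
    intro j
    have h1 := vX.sum_repr ⟨u j, huX j⟩
    calc u j = ((⟨u j, huX j⟩ : X) : Fin np → F) := rfl
      _ = ((∑ i, vX.repr ⟨u j, huX j⟩ i • vX i : X) : Fin np → F) := by rw [h1]
      _ = ∑ i, a i j • c1 i := by
          rw [Submodule.coe_sum]
          exact Finset.sum_congr rfl fun i _ => by simp [hadef, hc1def]
  have heval_u : ∀ j, evalQF p (u j) = ∑ i, r i * a i j ^ 2 := by
    intro j
    rw [hudecomp j, eval_sum_orth p c1 hc1orth (fun i => a i j)]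
  set z : Fin (k * nq) → F :=
    fun x => a (finProdFinEquiv.symm x).1 (finProdFinEquiv.symm x).2 with hzdef
  have hztensor : Isotropic (tensorQF r q) := by
    refine ⟨z, ?_, ?_⟩
    · -- z ≠ 0
      obtain ⟨x, hx⟩ : ∃ x, w x ≠ 0 := by
        by_contra hall
        push_neg at hall
        exact hw0 (funext hall)
      intro hz0
      obtain ⟨⟨i0, j0⟩, rfl⟩ : ∃ y : Fin np × Fin nq, finProdFinEquiv y = x :=
        ⟨finProdFinEquiv.symm x, Equiv.apply_symm_apply _ _⟩
      have huj : u j0 ≠ 0 := by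
        intro h
        exact hx (by rw [← hu] at *; exact congrFun h i0)
      apply huj
      rw [hudecomp j0]
      have hzero : ∀ i, a i j0 = 0 := by
        intro i
        have := congrFun hz0 (finProdFinEquiv (i, j0))
        simpa only [hzdef, Equiv.symm_apply_apply, Pi.zero_apply] using this
      simp [hzero]
    · -- value 0
      rw [tensor_eval]
      have hcols : ∀ j, (fun i => z (finProdFinEquiv (i, j))) = fun i => a i j := by
        intro j
        funext i
        simp only [hzdef, Equiv.symm_apply_apply]
      have h1 : ∀ j, evalQF r (fun i => z (finProdFinEquiv (i, j))) = evalQF p (u j) := by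
        intro j
        rw [hcols j, heval_u j, evalQF]
      rw [Finset.sum_congr rfl fun j _ => by rw [h1 j]]
      have h2 := tensor_eval p q w
      rw [hwval] at h2
      exact (by rw [← h2])
  exact ⟨k, r, hkle, hrnd, ⟨m, s, hsnd, hisom⟩, hztensor⟩
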